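/- arXiv:1903.07391 — 5 statements merged into one kernel-verified Lean document; each statement's English description precedes it below -/
import Mathlib

section
/- N-transform of the generalized rising function: for α ∈ ℂ with α not a negative integer, 𝒩_a{(k−a)^{ᾱ}}(s) = Γ(α+1)/s^{α+1} for complex s with |s−1| < 1 (and s in an appropriate branch domain), where (k−a)^{ᾱ} = Γ(k−a+α)/Γ(k−a) is the rising factorial function evaluated at k ∈ ℕ_{a+1}. -/
open Filter Topology Complex

namespace NTRF

noncomputable def c (α : ℂ) (n : ℕ) : ℂ :=
  Complex.Gamma ((n : ℂ) + 1 + α) / Complex.Gamma ((n : ℂ) + 1)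

lemma gamma_arg_ne {α : ℂ} (hα : ∀ n : ℕ, α ≠ -((n : ℂ) + 1)) (n : ℕ) :
    ∀ m : ℕ, (n : ℂ) + 1 + α ≠ -m := by
  intro m h
  have : α = -(((n + m : ℕ) : ℂ) + 1) := by push_cast; linear_combination h
  exact hα (n + m) this

lemma gamma_nat_ne (n : ℕ) : Complex.Gamma ((n : ℂ) + 1) ≠ 0 := by
  rw [Complex.Gamma_nat_eq_factorial]
  exact_mod_cast Nat.factorial_ne_zero n

lemma c_ne_zero {α : ℂ} (hα : ∀ n : ℕ, α ≠ -((n : ℂ) + 1)) (n : ℕ) : c α n ≠ 0 :=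
  div_ne_zero (Complex.Gamma_ne_zero (gamma_arg_ne hα n)) (gamma_nat_ne n)

lemma c_succ {α : ℂ} (hα : ∀ n : ℕ, α ≠ -((n : ℂ) + 1)) (n : ℕ) :
    c α (n + 1) = c α n * (((n : ℂ) + 1 + α) / ((n : ℂ) + 1)) := by
  have hne : ((n : ℂ) + 1 + α) ≠ 0 := by simpa using gamma_arg_ne hα n 0
  have hne2 : ((n : ℂ) + 1) ≠ 0 := Nat.cast_add_one_ne_zero n
  have e1 : ((n + 1 : ℕ) : ℂ) + 1 + α = ((n : ℂ) + 1 + α) + 1 := by push_cast; ring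
  have e2 : ((n + 1 : ℕ) : ℂ) + 1 = ((n : ℂ) + 1) + 1 := by push_cast; ring
  rw [c, c, e1, e2, Complex.Gamma_add_one _ hne, Complex.Gamma_add_one _ hne2]
  rw [div_mul_div_comm]; ring_nf

lemma tend_div (β : ℂ) : Tendsto (fun n : ℕ => β / ((n : ℂ) + 1)) atTop (𝓝 0) := by
  rw [tendsto_zero_iff_norm_tendsto_zero]
  have he : (fun n : ℕ => ‖β / ((n : ℂ) + 1)‖) = fun n : ℕ => ‖β‖ * (1 / ((n : ℝ) + 1)) := by
    funext n
    rw [norm_div, mul_one_div]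
    congr 1
    have h1 : ((n : ℂ) + 1) = (((n : ℝ) + 1 : ℝ) : ℂ) := by push_cast; ring
    rw [h1, Complex.norm_real, Real.norm_of_nonneg (by positivity)]
  rw [he]
  simpa using tendsto_one_div_add_atTop_nhds_zero_nat.const_mul ‖β‖

lemma tend_norm (w β : ℂ) :
    Tendsto (fun n : ℕ => ‖w * (1 + β / ((n : ℂ) + 1))‖) atTop (𝓝 ‖w‖) := by
  have h : Tendsto (fun n : ℕ => w * (1 + β / ((n : ℂ) + 1))) atTop (𝓝 w) := by
    have h2 := (tendsto_const_nhds (x := (1:ℂ)) (f := atTop (α := ℕ))).add (tend_div β)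
    have h3 := (tendsto_const_nhds (x := w) (f := atTop (α := ℕ))).mul h2
    simpa using h3
  simpa using h.norm

end NTRF

namespace NTRF

lemma summable_norm_main {α : ℂ} (hα : ∀ n : ℕ, α ≠ -((n : ℂ) + 1)) {w : ℂ} (hw : ‖w‖ < 1) :
    Summable (fun n : ℕ => ‖c α n * w ^ n‖) := by
  rcases eq_or_ne w 0 with rfl | h
  · apply summable_of_ne_finset_zero (s := {0})
    intro n hn
    simp only [Finset.mem_singleton] at hn
    simp [zero_pow hn]
  · apply summable_of_ratio_test_tendsto_lt_one hw
    · filter_upwards with n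
      simp only [ne_eq, norm_eq_zero]
      exact mul_ne_zero (c_ne_zero hα n) (pow_ne_zero _ h)
    · have he : (fun n : ℕ => ‖(fun m : ℕ => ‖c α m * w ^ m‖) (n + 1)‖ / ‖(fun m : ℕ => ‖c α m * w ^ m‖) n‖)
          = fun n : ℕ => ‖w * (1 + α / ((n : ℂ) + 1))‖ := by
        funext n
        have hd : c α n * w ^ n ≠ 0 := mul_ne_zero (c_ne_zero hα n) (pow_ne_zero _ h)
        have hne2 : ((n : ℂ) + 1) ≠ 0 := Nat.cast_add_one_ne_zero n
        simp only [norm_norm]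
        rw [← norm_div]
        congr 1
        rw [c_succ hα n, pow_succ]
        have hc := c_ne_zero hα n
        field_simp
      rw [he]
      exact tend_norm w α

lemma summable_main {α : ℂ} (hα : ∀ n : ℕ, α ≠ -((n : ℂ) + 1)) {w : ℂ} (hw : ‖w‖ < 1) :
    Summable (fun n : ℕ => c α n * w ^ n) :=
  (summable_norm_main hα hw).of_norm

lemma summable_norm_deriv {α : ℂ} (hα : ∀ n : ℕ, α ≠ -((n : ℂ) + 1)) {w : ℂ} (hw : ‖w‖ < 1) :
    Summable (fun n : ℕ => ‖c α n * ((n : ℂ) * w ^ (n - 1))‖) := by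
  rcases eq_or_ne w 0 with rfl | h
  · apply summable_of_ne_finset_zero (s := {0, 1})
    intro n hn
    simp only [Finset.mem_insert, Finset.mem_singleton] at hn
    push_neg at hn
    have h2 : n - 1 ≠ 0 := by omega
    simp [zero_pow h2]
  · apply summable_of_ratio_test_tendsto_lt_one hw
    · rw [eventually_atTop]
      refine ⟨1, fun n hn => ?_⟩
      have hn0 : (n : ℂ) ≠ 0 := Nat.cast_ne_zero.mpr (by omega)
      simp only [ne_eq, norm_eq_zero]
      exact mul_ne_zero (c_ne_zero hα n) (mul_ne_zero hn0 (pow_ne_zero _ h))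
    · rw [← tendsto_add_atTop_iff_nat 1]
      have he : (fun n : ℕ => ‖(fun m : ℕ => ‖c α m * ((m : ℂ) * w ^ (m - 1))‖) (n + 1 + 1)‖ /
            ‖(fun m : ℕ => ‖c α m * ((m : ℂ) * w ^ (m - 1))‖) (n + 1)‖)
          = fun n : ℕ => ‖w * (1 + (1 + α) / ((n : ℂ) + 1))‖ := by
        funext n
        have hne2 : ((n : ℂ) + 1) ≠ 0 := Nat.cast_add_one_ne_zero n
        have hne3 : ((n : ℂ) + 1 + 1) ≠ 0 := by
          have := Nat.cast_add_one_ne_zero (R := ℂ) (n + 1)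
          push_cast at this
          exact this
        simp only [norm_norm]
        rw [← norm_div]
        congr 1
        have e1 : n + 1 + 1 - 1 = n + 1 := rfl
        have e2 : n + 1 - 1 = n := rfl
        have hc := c_ne_zero hα (n + 1)
        have hden : c α (n + 1) * (((n + 1 : ℕ) : ℂ) * w ^ n) ≠ 0 := by
          push_cast
          exact mul_ne_zero hc (mul_ne_zero hne2 (pow_ne_zero _ h))
        rw [e1, e2, c_succ hα (n + 1), pow_succ, div_eq_iff hden]
        push_cast
        field_simp
        ring
      rw [he]
      exact tend_norm w (1 + α)

lemma summable_deriv {α : ℂ} (hα : ∀ n : ℕ, α ≠ -((n : ℂ) + 1)) {w : ℂ} (hw : ‖w‖ < 1) :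
    Summable (fun n : ℕ => c α n * ((n : ℂ) * w ^ (n - 1))) :=
  (summable_norm_deriv hα hw).of_norm

noncomputable def F (α : ℂ) (y : ℂ) : ℂ := ∑' n : ℕ, c α n * y ^ n

noncomputable def D (α : ℂ) (y : ℂ) : ℂ := ∑' n : ℕ, c α n * ((n : ℂ) * y ^ (n - 1))

lemma hasDerivAt_F {α : ℂ} (hα : ∀ n : ℕ, α ≠ -((n : ℂ) + 1)) {z : ℂ} (hz : ‖z‖ < 1) :
    HasDerivAt (F α) (D α z) z := by
  set r : ℝ := (1 + ‖z‖) / 2 with hr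
  have hr0 : 0 < r := by positivity
  have hzr : ‖z‖ < r := by rw [hr]; linarith
  have hr1 : r < 1 := by rw [hr]; linarith
  have hrn : ‖(r : ℂ)‖ < 1 := by
    rw [Complex.norm_real, Real.norm_of_nonneg hr0.le]; exact hr1
  exact hasDerivAt_tsum_of_isPreconnected
    (u := fun n => ‖c α n * ((n : ℂ) * (r : ℂ) ^ (n - 1))‖)
    (summable_norm_deriv hα hrn) Metric.isOpen_ball (convex_ball (0:ℂ) r).isPreconnected
    (fun n y _ => (hasDerivAt_pow n y).const_mul (c α n))
    (fun n y hy => by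
      have hy' : ‖y‖ ≤ r := by
        rw [Metric.mem_ball, dist_zero_right] at hy
        exact hy.le
      simp only [norm_mul, Complex.norm_natCast, norm_pow, Complex.norm_real,
        Real.norm_of_nonneg hr0.le]
      gcongr)
    (Metric.mem_ball_self hr0)
    (summable_main hα (by simp))
    (by rwa [Metric.mem_ball, dist_zero_right])

lemma key {α : ℂ} (hα : ∀ n : ℕ, α ≠ -((n : ℂ) + 1)) {z : ℂ} (hz : ‖z‖ < 1) :
    (1 - z) * D α z = (α + 1) * F α z := by
  have hF : HasSum (fun n : ℕ => c α n * z ^ n) (F α z) := (summable_main hα hz).hasSum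
  have hD : HasSum (fun n : ℕ => c α n * ((n : ℂ) * z ^ (n - 1))) (D α z) :=
    (summable_deriv hα hz).hasSum
  have h1 : HasSum (fun n : ℕ => c α (n + 1) * (((n : ℂ) + 1) * z ^ n)) (D α z) := by
    have := (hasSum_nat_add_iff' (f := fun n : ℕ => c α n * ((n : ℂ) * z ^ (n - 1))) 1).mpr hD
    simp only [Finset.range_one, Finset.sum_singleton, Nat.cast_zero, zero_mul, mul_zero,
      sub_zero] at this
    convert this using 2 with n
    · rfl
    push_cast
    rfl
  have h2 : HasSum (fun n : ℕ => c α n * ((n : ℂ) * z ^ n)) (z * D α z) := by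
    have := hD.mul_left z
    convert this using 2 with n
    · rfl
    cases n with
    | zero => simp
    | succ m =>
      simp only [Nat.succ_sub_one]
      push_cast
      ring
  have h3 := h1.sub h2
  have h4 : HasSum (fun n : ℕ => (α + 1) * (c α n * z ^ n)) (D α z - z * D α z) := by
    convert h3 using 2 with n
    · rfl
    rw [c_succ hα n]
    have hne2 : ((n : ℂ) + 1) ≠ 0 := Nat.cast_add_one_ne_zero n
    field_simp
    ring
  have h5 := hF.mul_left (α + 1)
  have := h4.unique h5
  linear_combination this

lemma hasDerivAt_G {α : ℂ} (hα : ∀ n : ℕ, α ≠ -((n : ℂ) + 1)) {z : ℂ} (hz : ‖z‖ < 1) :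
    HasDerivAt (fun y => F α y * (1 - y) ^ (α + 1)) 0 z := by
  have hzne : (1 - z) ≠ 0 := by
    intro h
    have : z = 1 := by linear_combination -h
    rw [this] at hz
    simp at hz
  have hslit : (1 - z) ∈ Complex.slitPlane := by
    rw [Complex.mem_slitPlane_iff]
    left
    have : z.re ≤ ‖z‖ := by
      calc z.re ≤ |z.re| := le_abs_self _
      _ ≤ ‖z‖ := Complex.abs_re_le_norm z
    simp only [Complex.sub_re, Complex.one_re]
    linarith
  have hinner : HasDerivAt (fun y : ℂ => 1 - y) (-1) z := (hasDerivAt_id z).const_sub 1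
  have hcp := hinner.cpow_const (c := α + 1) hslit
  have hprod := (hasDerivAt_F hα hz).mul hcp
  have hval : D α z * (1 - z) ^ (α + 1) +
      F α z * ((α + 1) * (1 - z) ^ (α + 1 - 1) * (-1)) = 0 := by
    have e0 : α + 1 - 1 = α := by ring
    rw [e0]
    have hsplit : (1 - z) ^ (α + 1) = (1 - z) ^ α * (1 - z) := by
      rw [Complex.cpow_add _ _ hzne, Complex.cpow_one]
    rw [hsplit]
    linear_combination (1 - z) ^ α * key hα hz
  rw [hval] at hprod
  exact hprod

end NTRF

/-- N-transform of the generalized rising function: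
`𝒩_a{(k−a)^{ᾱ}}(s) = Γ(α+1)/s^(α+1)` for `|s−1| < 1`. -/
theorem nabla_transform_rising_function
    (α : ℂ) (hα : ∀ n : ℕ, α ≠ -((n : ℂ) + 1)) :
    ∀ s : ℂ, ‖s - 1‖ < 1 → s ≠ 0 →
      HasSum (fun k : ℕ =>
          (1 - s) ^ k * (Complex.Gamma ((k : ℂ) + 1 + α) / Complex.Gamma ((k : ℂ) + 1)))
        (Complex.Gamma (α + 1) / s ^ (α + 1)) := by
  intro s hs hs0
  set z : ℂ := 1 - s with hzdef
  have hz : ‖z‖ < 1 := by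
    rw [hzdef]
    rw [show (1 : ℂ) - s = -(s - 1) from by ring, norm_neg]
    exact hs
  have hG := (convex_ball (0:ℂ) 1).is_const_of_fderivWithin_eq_zero
    (f := fun y => NTRF.F α y * (1 - y) ^ (α + 1)) (x := z) (y := 0)
    (fun y hy => by
      rw [Metric.mem_ball, dist_zero_right] at hy
      exact (NTRF.hasDerivAt_G hα hy).differentiableAt.differentiableWithinAt)
    (fun x hx => by
      have hx' : ‖x‖ < 1 := by rwa [Metric.mem_ball, dist_zero_right] at hx
      rw [fderivWithin_of_isOpen Metric.isOpen_ball hx]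
      rw [(NTRF.hasDerivAt_G hα hx').hasFDerivAt.fderiv]
      ext
      simp)
    (by rwa [Metric.mem_ball, dist_zero_right]) (Metric.mem_ball_self zero_lt_one)
  have hF0 : NTRF.F α 0 = NTRF.c α 0 := by
    rw [NTRF.F]
    rw [tsum_eq_single 0 (fun n hn => by simp [zero_pow hn])]
    simp
  have hc0 : NTRF.c α 0 = Complex.Gamma (α + 1) := by
    rw [NTRF.c]
    have e : ((0 : ℕ) : ℂ) + 1 + α = α + 1 := by push_cast; ring
    rw [e]
    simp [Complex.Gamma_one]
  have hG0 : NTRF.F α 0 * (1 - 0 : ℂ) ^ (α + 1) = Complex.Gamma (α + 1) := by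
    rw [hF0, hc0]
    simp [Complex.one_cpow]
  have h1z : (1 : ℂ) - z = s := by rw [hzdef]; ring
  have hG' : NTRF.F α z * (1 - z) ^ (α + 1) = NTRF.F α 0 * (1 - (0:ℂ)) ^ (α + 1) := hG
  have hmain : NTRF.F α z * s ^ (α + 1) = Complex.Gamma (α + 1) := by
    rw [← h1z]
    rw [hG']
    exact hG0
  have hspow : s ^ (α + 1) ≠ 0 := by
    rw [ne_eq, Complex.cpow_eq_zero_iff]
    tauto
  have hFval : NTRF.F α z = Complex.Gamma (α + 1) / s ^ (α + 1) :=
    (eq_div_iff hspow).mpr hmain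
  have hsum : HasSum (fun n : ℕ => NTRF.c α n * z ^ n) (NTRF.F α z) :=
    (NTRF.summable_main hα hz).hasSum
  rw [hFval] at hsum
  convert hsum using 2 with k
  rw [NTRF.c, hzdef]
  ring
end

section
/- Accumulation property of the N-transform: if X(s) = 𝒩_a{x}(s) converges for |s−1| < r, then the N-transform of the running sum y(k) = Σ_{j=a+1}^{k} x(j) converges for |s−1| < min(1, r), with s ≠ 0, and equals X(s)/s. -/
/-- Accumulation property of the N-transform:
the running sum has transform `X(s)/s`. -/
theorem nabla_transform_accumulation
    (a : ℤ) (x : ℤ → ℝ) (X : ℂ → ℂ) (r : ℝ)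
    (hX : ∀ s : ℂ, ‖s - 1‖ < r →
      HasSum (fun k : ℕ => (1 - s) ^ k * (x ((k : ℤ) + 1 + a) : ℂ)) (X s)) :
    ∀ s : ℂ, ‖s - 1‖ < min 1 r → s ≠ 0 →
      HasSum (fun k : ℕ =>
          (1 - s) ^ k * ((∑ j ∈ Finset.range (k + 1), x ((j : ℤ) + 1 + a) : ℝ) : ℂ))
        (X s / s) := by
  intro s hsr hs0
  have habsq : ‖1 - s‖ < min 1 r := by rw [norm_sub_rev]; exact hsr
  set q : ℂ := 1 - s with hq
  clear_value q
  have h0q : 0 ≤ ‖q‖ := norm_nonneg _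
  obtain ⟨ρ, hqρ, hρm⟩ := exists_between habsq
  have hρ1 : ρ < 1 := lt_of_lt_of_le hρm (min_le_left _ _)
  have hρr : ρ < r := lt_of_lt_of_le hρm (min_le_right _ _)
  have hρ0 : 0 < ρ := lt_of_le_of_lt h0q hqρ
  -- convergence at the point 1 - ρ
  have hXρ : HasSum (fun k : ℕ => ((ρ : ℂ)) ^ k * (x ((k : ℤ) + 1 + a) : ℂ)) (X (1 - ρ)) := by
    have h := hX (1 - (ρ : ℂ)) (by
      have : ((1 : ℂ) - (ρ : ℂ)) - 1 = -(ρ : ℂ) := by ring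
      rw [this, norm_neg, Complex.norm_real, Real.norm_eq_abs, abs_of_pos hρ0]
      exact hρr)
    have e : (1 : ℂ) - (1 - (ρ : ℂ)) = (ρ : ℂ) := by ring
    rw [e] at h
    exact h
  -- bound on the coefficients
  obtain ⟨C, hC⟩ : ∃ C, ∀ k : ℕ, ‖(x ((k : ℤ) + 1 + a) : ℂ)‖ ≤ C / ρ ^ k := by
    have h0 : Filter.Tendsto (fun k : ℕ => ‖((ρ : ℂ)) ^ k * (x ((k : ℤ) + 1 + a) : ℂ)‖)
        Filter.atTop (nhds 0) := by
      simpa using (hXρ.summable.tendsto_atTop_zero).norm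
    obtain ⟨C, hC⟩ := h0.bddAbove_range
    refine ⟨C, fun k => ?_⟩
    have hk := hC (Set.mem_range_self k)
    rw [norm_mul, norm_pow, Complex.norm_real, Real.norm_eq_abs, abs_of_pos hρ0] at hk
    rw [le_div_iff₀ (pow_pos hρ0 k)]
    linarith [hk]
  have hC0 : 0 ≤ C := by
    have := (norm_nonneg (x ((0 : ℤ) + 1 + a) : ℂ)).trans (hC 0)
    simpa using this
  -- summability of the accumulated series
  set t : ℝ := ‖q‖ / ρ with htdef
  clear_value t
  have ht0 : 0 ≤ t := by rw [htdef]; exact div_nonneg h0q hρ0.le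
  have ht1 : t < 1 := by rw [htdef]; exact (div_lt_one hρ0).mpr hqρ
  have hsum_t : Summable (fun k : ℕ => C * ((k : ℝ) + 1) * t ^ k) := by
    have h1 : Summable (fun k : ℕ => (k : ℝ) * t ^ k) := by
      simpa using summable_pow_mul_geometric_of_norm_lt_one 1
        (r := t) (by rwa [Real.norm_eq_abs, abs_of_nonneg ht0])
    have h2 : Summable (fun k : ℕ => t ^ k) := summable_geometric_of_lt_one ht0 ht1
    have h3 := (h1.add h2).mul_left C
    refine h3.congr fun k => ?_
    ring
  set f : ℕ → ℂ := fun k : ℕ =>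
    q ^ k * ((∑ j ∈ Finset.range (k + 1), x ((j : ℤ) + 1 + a) : ℝ) : ℂ) with hfdef
  have hycast : ∀ k : ℕ, ((∑ j ∈ Finset.range (k + 1), x ((j : ℤ) + 1 + a) : ℝ) : ℂ)
      = ∑ j ∈ Finset.range (k + 1), (x ((j : ℤ) + 1 + a) : ℂ) := by
    intro k; push_cast; rfl
  have hfb : ∀ k : ℕ, ‖f k‖ ≤ C * ((k : ℝ) + 1) * t ^ k := by
    intro k
    have hyb : ‖((∑ j ∈ Finset.range (k + 1), x ((j : ℤ) + 1 + a) : ℝ) : ℂ)‖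
        ≤ ((k : ℝ) + 1) * (C / ρ ^ k) := by
      rw [hycast k]
      calc ‖∑ j ∈ Finset.range (k + 1), (x ((j : ℤ) + 1 + a) : ℂ)‖
          ≤ ∑ j ∈ Finset.range (k + 1), ‖(x ((j : ℤ) + 1 + a) : ℂ)‖ :=
            norm_sum_le _ _
        _ ≤ ∑ j ∈ Finset.range (k + 1), C / ρ ^ k := by
            refine Finset.sum_le_sum fun j hj => ?_
            refine (hC j).trans ?_
            have hjk : j ≤ k := Nat.lt_succ_iff.mp (Finset.mem_range.mp hj)
            have hpp : ρ ^ k ≤ ρ ^ j := pow_le_pow_of_le_one hρ0.le hρ1.le hjk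
            rw [div_le_div_iff₀ (pow_pos hρ0 j) (pow_pos hρ0 k)]
            exact mul_le_mul_of_nonneg_left hpp hC0
        _ = ((k : ℝ) + 1) * (C / ρ ^ k) := by
            rw [Finset.sum_const, Finset.card_range]
            push_cast; ring
    have : ‖f k‖ = ‖q‖ ^ k *
        ‖((∑ j ∈ Finset.range (k + 1), x ((j : ℤ) + 1 + a) : ℝ) : ℂ)‖ := by
      rw [hfdef]; simp [norm_mul, norm_pow]
    rw [this]
    calc ‖q‖ ^ k *
        ‖((∑ j ∈ Finset.range (k + 1), x ((j : ℤ) + 1 + a) : ℝ) : ℂ)‖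
        ≤ ‖q‖ ^ k * (((k : ℝ) + 1) * (C / ρ ^ k)) := by
          gcongr
      _ = C * ((k : ℝ) + 1) * t ^ k := by
          rw [htdef, div_pow, div_eq_mul_inv, div_eq_mul_inv]
          ring
  have hfS : Summable f := Summable.of_norm_bounded hsum_t hfb
  -- the series at s itself
  have hXs : HasSum (fun k : ℕ => q ^ k * (x ((k : ℤ) + 1 + a) : ℂ)) (X s) := by
    rw [hq]; exact hX s (lt_of_lt_of_le hsr (min_le_right _ _))
  have hg : Summable (fun k : ℕ => q ^ k * (x ((k : ℤ) + 1 + a) : ℂ)) := hXs.summable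
  -- telescoping identity
  set T : ℂ := ∑' k, f k with hTdef
  clear_value T
  have hT : HasSum f T := hTdef ▸ hfS.hasSum
  have hshift : Summable (fun k : ℕ => f (k + 1)) := (summable_nat_add_iff 1).mpr hfS
  have hstep : ∀ k : ℕ, f (k + 1) - q * f k = q ^ (k + 1) * (x (((k + 1 : ℕ) : ℤ) + 1 + a) : ℂ) := by
    intro k
    have hy : ((∑ j ∈ Finset.range (k + 1 + 1), x ((j : ℤ) + 1 + a) : ℝ) : ℂ)
        = ((∑ j ∈ Finset.range (k + 1), x ((j : ℤ) + 1 + a) : ℝ) : ℂ)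
          + (x (((k + 1 : ℕ) : ℤ) + 1 + a) : ℂ) := by
      rw [Finset.sum_range_succ]; push_cast; ring
    rw [hfdef]
    simp only
    rw [hy]
    ring
  have hsub : Summable (fun k : ℕ => f (k + 1) - q * f k) := by
    refine Summable.congr ?_ fun k => (hstep k).symm
    exact (summable_nat_add_iff 1).mpr hg
  have hkey : (1 - q) * T = X s := by
    have e1 : T = f 0 + ∑' k, f (k + 1) := by
      rw [hTdef]; exact Summable.tsum_eq_zero_add hfS
    have e2 : q * T = ∑' k, q * f k := by
      rw [hTdef, tsum_mul_left]
    have e3 : (∑' k, f (k + 1)) - (∑' k, q * f k) = ∑' k, (f (k + 1) - q * f k) := by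
      rw [← Summable.tsum_sub hshift (hfS.mul_left q)]
    have e4 : ∑' k, (f (k + 1) - q * f k)
        = ∑' k, q ^ (k + 1) * (x (((k + 1 : ℕ) : ℤ) + 1 + a) : ℂ) :=
      tsum_congr hstep
    have e5 : X s = q ^ 0 * (x (((0 : ℕ) : ℤ) + 1 + a) : ℂ)
        + ∑' k, q ^ (k + 1) * (x (((k + 1 : ℕ) : ℤ) + 1 + a) : ℂ) := by
      rw [← hXs.tsum_eq]
      exact Summable.tsum_eq_zero_add hg
    have e6 : f 0 = q ^ 0 * (x (((0 : ℕ) : ℤ) + 1 + a) : ℂ) := by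
      rw [hfdef]; simp [Finset.sum_range_one]
    calc (1 - q) * T = T - q * T := by ring
      _ = f 0 + ((∑' k, f (k + 1)) - (∑' k, q * f k)) := by
          rw [e2]; rw [e1]; ring
      _ = f 0 + ∑' k, (f (k + 1) - q * f k) := by rw [e3]
      _ = X s := by rw [e4, e6, ← e5]
  have hTeq : T = X s / s := by
    have hsq : (1 : ℂ) - q = s := by rw [hq]; ring
    rw [hsq] at hkey
    field_simp
    rw [mul_comm]
    exact hkey
  rw [← hTeq]
  exact hT
end

section
/- N-transform of the n-th nabla difference: if X(s) = 𝒩_a{x}(s) converges for |s−1| < r ≤ 1, then for any n ∈ ℤ₊, 𝒩_a{∇ⁿx}(s) = sⁿ X(s) − Σ_{j=0}^{n−1} s^{n−j−1} (∇ʲx)(a), where ∇ⁿx(k) = Σ_{j=0}^{n} (−1)ʲ C(n,j) x(k−j). -/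
/-- The `n`-th nabla (backward) difference `∇ⁿx(k) = Σ_{j=0}^{n} (−1)ʲ C(n,j) x(k−j)`. -/
noncomputable def nablaDiff (n : ℕ) (x : ℤ → ℝ) (k : ℤ) : ℝ :=
  ∑ j ∈ Finset.range (n + 1), (-1 : ℝ) ^ j * (n.choose j : ℝ) * x (k - (j : ℤ))

lemma nabla_succ (n : ℕ) (x : ℤ → ℝ) (k : ℤ) :
    nablaDiff (n+1) x k = nablaDiff n x k - nablaDiff n x (k-1) := by
  unfold nablaDiff
  have harg : ∀ j : ℕ, k - ((j:ℤ)+1) = k - 1 - j := fun j => by ring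
  have h1 : ∑ j ∈ Finset.range (n+1+1), (-1:ℝ)^j * ((n+1).choose j : ℝ) * x (k - j)
      = (∑ j ∈ Finset.range (n+1), ((-1:ℝ)^(j+1) * (n.choose j : ℝ) * x (k-1-j)
          + (-1:ℝ)^(j+1) * (n.choose (j+1) : ℝ) * x (k-1-j))) + x k := by
    rw [Finset.sum_range_succ' _ (n+1)]
    congr 1
    · apply Finset.sum_congr rfl
      intro j _
      push_cast [Nat.choose_succ_succ]
      rw [harg j]
      ring
    · simp
  have h2 : ∑ j ∈ Finset.range (n+1), (-1:ℝ)^j * (n.choose j : ℝ) * x (k - j)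
      = (∑ j ∈ Finset.range n, (-1:ℝ)^(j+1) * (n.choose (j+1) : ℝ) * x (k-1-j)) + x k := by
    rw [Finset.sum_range_succ' _ n]
    congr 1
    · apply Finset.sum_congr rfl
      intro j _
      push_cast
      rw [harg j]
    · simp
  have h3 : ∑ j ∈ Finset.range (n+1), (-1:ℝ)^(j+1) * (n.choose (j+1) : ℝ) * x (k-1-j)
      = ∑ j ∈ Finset.range n, (-1:ℝ)^(j+1) * (n.choose (j+1) : ℝ) * x (k-1-j) := by
    rw [Finset.sum_range_succ]
    simp [Nat.choose_succ_self]
  rw [h1, h2, Finset.sum_add_distrib, h3]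
  have h5 : ∑ j ∈ Finset.range (n+1), (-1:ℝ)^(j+1) * (n.choose j : ℝ) * x (k-1-j)
      = - ∑ j ∈ Finset.range (n+1), (-1:ℝ)^j * (n.choose j : ℝ) * x ((k-1) - j) := by
    rw [← Finset.sum_neg_distrib]
    apply Finset.sum_congr rfl
    intro j _
    ring
  rw [h5]
  ring

lemma step_transform (a : ℤ) (y : ℤ → ℝ) (s Y : ℂ)
    (h : HasSum (fun k : ℕ => (1 - s) ^ k * (y ((k:ℤ) + 1 + a) : ℂ)) Y) :
    HasSum (fun k : ℕ => (1 - s) ^ k * ((y ((k:ℤ) + 1 + a) - y ((k:ℤ) + a) : ℝ) : ℂ))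
      (s * Y - (y a : ℂ)) := by
  have h1 : HasSum (fun k : ℕ => (fun m : ℕ => (1 - s) ^ m * (y ((m:ℤ) + a) : ℂ)) (k + 1))
      ((1 - s) * Y) := by
    have := h.mul_left (1 - s)
    convert this using 2 with k
    · rfl
    push_cast
    rw [pow_succ]
    ring_nf
  have h2 : HasSum (fun m : ℕ => (1 - s) ^ m * (y ((m:ℤ) + a) : ℂ))
      ((1 - s) * Y + (y a : ℂ)) := by
    have := (hasSum_nat_add_iff (f := fun m : ℕ => (1 - s) ^ m * (y ((m:ℤ) + a) : ℂ)) 1).mp h1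
    simpa using this
  have h3 := h.sub h2
  have : Y - ((1 - s) * Y + (y a : ℂ)) = s * Y - (y a : ℂ) := by ring
  rw [this] at h3
  convert h3 using 2 with k
  · rfl
  push_cast
  ring

/-- N-transform of the `n`-th nabla difference:
`𝒩_a{∇ⁿx}(s) = sⁿ X(s) − Σ_{j=0}^{n−1} s^{n−j−1} (∇ʲx)(a)`. -/
theorem nabla_transform_nabla_diff_n
    (a : ℤ) (x : ℤ → ℝ) (X : ℂ → ℂ) (r : ℝ) (hr : r ≤ 1)
    (hX : ∀ s : ℂ, ‖s - 1‖ < r →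
      HasSum (fun k : ℕ => (1 - s) ^ k * (x ((k : ℤ) + 1 + a) : ℂ)) (X s)) :
    ∀ n : ℕ, 0 < n → ∀ s : ℂ, ‖s - 1‖ < r →
      HasSum (fun k : ℕ => (1 - s) ^ k * (nablaDiff n x ((k : ℤ) + 1 + a) : ℂ))
        (s ^ n * X s -
          ∑ j ∈ Finset.range n, s ^ (n - j - 1) * (nablaDiff j x a : ℂ)) := by
  have key : ∀ n : ℕ, ∀ s : ℂ, ‖s - 1‖ < r →
      HasSum (fun k : ℕ => (1 - s) ^ k * (nablaDiff n x ((k : ℤ) + 1 + a) : ℂ))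
        (s ^ n * X s -
          ∑ j ∈ Finset.range n, s ^ (n - j - 1) * (nablaDiff j x a : ℂ)) := by
    intro n
    induction n with
    | zero =>
      intro s hs
      simpa [nablaDiff] using hX s hs
    | succ n ih =>
      intro s hs
      have h := step_transform a (nablaDiff n x) s _ (ih s hs)
      have heq : (fun k : ℕ => (1 - s) ^ k *
          ((nablaDiff n x ((k:ℤ) + 1 + a) - nablaDiff n x ((k:ℤ) + a) : ℝ) : ℂ))
          = fun k : ℕ => (1 - s) ^ k * (nablaDiff (n+1) x ((k:ℤ) + 1 + a) : ℂ) := by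
        funext k
        rw [nabla_succ]
        have harg : (k:ℤ) + 1 + a - 1 = (k:ℤ) + a := by ring
        rw [harg]
      rw [heq] at h
      convert h using 1
      rw [Finset.sum_range_succ]
      have hmul : s * ∑ j ∈ Finset.range n, s ^ (n - j - 1) * (nablaDiff j x a : ℂ)
          = ∑ j ∈ Finset.range n, s ^ (n + 1 - j - 1) * (nablaDiff j x a : ℂ) := by
        rw [Finset.mul_sum]
        apply Finset.sum_congr rfl
        intro j hj
        rw [Finset.mem_range] at hj
        rw [← mul_assoc, ← pow_succ']
        congr 2
        omega
      have hnn : n + 1 - n - 1 = 0 := by omega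
      rw [hnn, pow_zero, one_mul, ← hmul]
      ring
  intro n _
  exact key n
end

section
/- N-transform of the nabla fractional sum: for x : ℕ_{a+1} → ℝ with X(s) = 𝒩_a{x}(s) converging for |s−1| < r, and for any α > 0, the N-transform of the α-th nabla fractional sum (∇^{−α}x)(k) = Σ_{j=0}^{k−a−1} (−1)ʲ binom(−α, j) x(k−j) equals X(s)/s^α for |s−1| < min(1, r). -/
open Filter Topology Metric

noncomputable def bc (α : ℝ) (j : ℕ) : ℝ :=
  Real.Gamma (α + j) / (Real.Gamma ((j : ℝ) + 1) * Real.Gamma α)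

lemma bc_pos {α : ℝ} (hα : 0 < α) (j : ℕ) : 0 < bc α j := by
  have h1 : 0 < Real.Gamma (α + j) := Real.Gamma_pos_of_pos (by positivity)
  have h2 : 0 < Real.Gamma ((j : ℝ) + 1) := Real.Gamma_pos_of_pos (by positivity)
  have h3 : 0 < Real.Gamma α := Real.Gamma_pos_of_pos hα
  exact div_pos h1 (mul_pos h2 h3)

lemma bc_zero {α : ℝ} (hα : 0 < α) : bc α 0 = 1 := by
  have h3 : Real.Gamma α ≠ 0 := (Real.Gamma_pos_of_pos hα).ne'
  simp [bc, Real.Gamma_one, h3]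

lemma bc_succ {α : ℝ} (hα : 0 < α) (j : ℕ) :
    bc α (j + 1) * ((j : ℝ) + 1) = bc α j * (α + j) := by
  have hαj : α + (j : ℝ) ≠ 0 := by positivity
  have hj1 : ((j : ℝ) + 1) ≠ 0 := by positivity
  have e1 : Real.Gamma (α + ((j + 1 : ℕ) : ℝ)) = (α + j) * Real.Gamma (α + j) := by
    push_cast
    rw [show α + ((j : ℝ) + 1) = (α + (j : ℝ)) + 1 by ring, Real.Gamma_add_one hαj]
  have e2 : Real.Gamma (((j + 1 : ℕ) : ℝ) + 1) = ((j : ℝ) + 1) * Real.Gamma ((j : ℝ) + 1) := by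
    push_cast
    rw [show (j : ℝ) + 1 + 1 = ((j : ℝ) + 1) + 1 by ring, Real.Gamma_add_one hj1]
  have h2 : Real.Gamma ((j : ℝ) + 1) ≠ 0 := (Real.Gamma_pos_of_pos (by positivity)).ne'
  have h3 : Real.Gamma α ≠ 0 := (Real.Gamma_pos_of_pos hα).ne'
  unfold bc
  rw [e1, e2]
  field_simp

lemma bc_def (α : ℝ) (j : ℕ) :
    bc α j = Real.Gamma (α + j) / (Real.Gamma ((j : ℝ) + 1) * Real.Gamma α) := rfl

lemma bc_succ_eq {α : ℝ} (hα : 0 < α) (j : ℕ) :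
    bc α (j + 1) = bc α j * (α + j) / ((j : ℝ) + 1) := by
  rw [eq_div_iff (by positivity : ((j : ℝ) + 1) ≠ 0)]
  exact bc_succ hα j

lemma aux_tendsto (c ρ : ℝ) :
    Tendsto (fun j : ℕ => (1 + c / ((j : ℝ) + 1)) * ρ) atTop (𝓝 ρ) := by
  have h0 : Tendsto (fun j : ℕ => ((j : ℝ) + 1)) atTop atTop :=
    tendsto_atTop_add_const_right _ 1 tendsto_natCast_atTop_atTop
  have hdiv : Tendsto (fun j : ℕ => c / ((j : ℝ) + 1)) atTop (𝓝 0) :=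
    Tendsto.div_atTop (tendsto_const_nhds : Tendsto (fun _ : ℕ => c) atTop (𝓝 c)) h0
  have h1 : Tendsto (fun j : ℕ => 1 + c / ((j : ℝ) + 1)) atTop (𝓝 (1 + 0)) :=
    (tendsto_const_nhds : Tendsto (fun _ : ℕ => (1:ℝ)) atTop (𝓝 1)).add hdiv
  have := h1.mul_const ρ
  simpa using this

lemma aux_tendsto' (c ρ : ℝ) :
    Tendsto (fun j : ℕ => (1 + c / (j : ℝ)) * ρ) atTop (𝓝 ρ) := by
  have hdiv : Tendsto (fun j : ℕ => c / (j : ℝ)) atTop (𝓝 0) :=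
    Tendsto.div_atTop (tendsto_const_nhds : Tendsto (fun _ : ℕ => c) atTop (𝓝 c))
      tendsto_natCast_atTop_atTop
  have h1 : Tendsto (fun j : ℕ => 1 + c / (j : ℝ)) atTop (𝓝 (1 + 0)) :=
    (tendsto_const_nhds : Tendsto (fun _ : ℕ => (1:ℝ)) atTop (𝓝 1)).add hdiv
  have := h1.mul_const ρ
  simpa using this

lemma summable_bc {α : ℝ} (hα : 0 < α) {ρ : ℝ} (h0 : 0 ≤ ρ) (h1 : ρ < 1) :
    Summable (fun j : ℕ => bc α j * ρ ^ j) := by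
  rcases h0.eq_or_lt with h | hρ
  · apply summable_of_ne_finset_zero (s := {0})
    intro j hj
    simp only [Finset.mem_singleton] at hj
    rw [← h, zero_pow hj, mul_zero]
  · apply summable_of_ratio_test_tendsto_lt_one h1
    · exact Eventually.of_forall fun j => (mul_pos (bc_pos hα j) (pow_pos hρ j)).ne'
    · apply (aux_tendsto (α - 1) ρ).congr
      intro j
      have hbj := bc_pos hα j
      have hbj1 := bc_pos hα (j + 1)
      have hpj := pow_pos hρ j
      rw [Real.norm_eq_abs, Real.norm_eq_abs, abs_of_pos (by positivity),
        abs_of_pos (by positivity), bc_succ_eq hα j, pow_succ]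
      have hj1 : ((j : ℝ) + 1) ≠ 0 := by positivity
      field_simp
      ring

lemma summable_bc_deriv {α : ℝ} (hα : 0 < α) {ρ : ℝ} (hρ : 0 < ρ) (h1 : ρ < 1) :
    Summable (fun j : ℕ => bc α j * j * ρ ^ (j - 1)) := by
  apply summable_of_ratio_test_tendsto_lt_one h1
  · filter_upwards [eventually_ge_atTop 1] with j hj
    have hj' : (0:ℝ) < j := by exact_mod_cast hj
    exact (mul_pos (mul_pos (bc_pos hα j) hj') (pow_pos hρ _)).ne'
  · apply (aux_tendsto' α ρ).congr'
    filter_upwards [eventually_ge_atTop 1] with j hj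
    obtain ⟨m, rfl⟩ := Nat.exists_eq_add_of_le hj
    have hb1 := bc_pos hα (1 + m)
    have hb2 := bc_pos hα (1 + m + 1)
    have hm1 : (0:ℝ) < ((1 + m : ℕ) : ℝ) := by positivity
    have hm2 : (0:ℝ) < ((1 + m + 1 : ℕ) : ℝ) := by positivity
    have e : bc α (1 + m + 1) = bc α (1 + m) * (α + (1 + m : ℕ)) / (((1 + m : ℕ) : ℝ) + 1) :=
      bc_succ_eq hα (1 + m)
    have hpm := pow_pos hρ m
    have hpm1 := pow_pos hρ (m + 1)
    rw [Real.norm_eq_abs, Real.norm_eq_abs,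
      abs_of_pos (mul_pos (mul_pos hb2 hm2) (by rw [show 1 + m + 1 - 1 = m + 1 by omega]; exact hpm1)),
      abs_of_pos (mul_pos (mul_pos hb1 hm1) (by rw [show 1 + m - 1 = m by omega]; exact hpm))]
    rw [show 1 + m + 1 - 1 = m + 1 by omega, show 1 + m - 1 = m by omega, e]
    push_cast
    rw [pow_succ]
    have h1m : (0:ℝ) < 1 + (m:ℝ) := by positivity
    field_simp
    ring

lemma summable_bc_cx {α : ℝ} (hα : 0 < α) {w : ℂ} (hw : ‖w‖ < 1) :
    Summable (fun j : ℕ => (bc α j : ℂ) * w ^ j) := by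
  apply Summable.of_norm
  apply ((summable_bc hα (norm_nonneg w) hw)).congr
  intro j
  rw [norm_mul, norm_pow, Complex.norm_real, Real.norm_eq_abs, abs_of_pos (bc_pos hα j)]

lemma bderiv {α : ℝ} (hα : 0 < α) {w : ℂ} (hw : ‖w‖ < 1) :
    ∃ D : ℂ, HasDerivAt (fun z : ℂ => ∑' j : ℕ, (bc α j : ℂ) * z ^ j) D w ∧
      D * (1 - w) = α * ∑' j : ℕ, (bc α j : ℂ) * w ^ j := by
  set ρ : ℝ := (‖w‖ + 1) / 2 with hρdef
  have hρ0 : 0 < ρ := by positivity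
  have hρ1 : ρ < 1 := by rw [hρdef]; linarith
  have hwρ : ‖w‖ < ρ := by rw [hρdef]; linarith
  set g' : ℕ → ℂ → ℂ := fun j y => (bc α j : ℂ) * ((j : ℂ) * y ^ (j - 1)) with hg'def
  have hu : Summable (fun j : ℕ => bc α j * j * ρ ^ (j - 1)) := summable_bc_deriv hα hρ0 hρ1
  have hg : ∀ (j : ℕ) (y : ℂ), y ∈ ball (0:ℂ) ρ →
      HasDerivAt (fun z : ℂ => (bc α j : ℂ) * z ^ j) (g' j y) y := by
    intro j y _
    exact (hasDerivAt_pow j y).const_mul _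
  have hg' : ∀ (j : ℕ) (y : ℂ), y ∈ ball (0:ℂ) ρ →
      ‖g' j y‖ ≤ bc α j * j * ρ ^ (j - 1) := by
    intro j y hy
    rw [mem_ball_zero_iff] at hy
    rw [hg'def]
    simp only [norm_mul, Complex.norm_real, Complex.norm_natCast, norm_pow,
      Real.norm_eq_abs, abs_of_pos (bc_pos hα j)]
    rw [mul_assoc]
    have hpow : ‖y‖ ^ (j - 1) ≤ ρ ^ (j - 1) := pow_le_pow_left₀ (norm_nonneg y) hy.le _
    exact mul_le_mul_of_nonneg_left (mul_le_mul_of_nonneg_left hpow (Nat.cast_nonneg j))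
      (bc_pos hα j).le
  have hg0 : Summable (fun j : ℕ => (bc α j : ℂ) * (0:ℂ) ^ j) :=
    summable_bc_cx hα (by simp)
  have hDsum : Summable (fun j : ℕ => g' j w) :=
    Summable.of_norm_bounded hu (fun j => hg' j w (mem_ball_zero_iff.mpr hwρ))
  refine ⟨∑' j, g' j w, ?_, ?_⟩
  · exact hasDerivAt_tsum_of_isPreconnected hu isOpen_ball (convex_ball (0:ℂ) ρ).isPreconnected
      hg hg' (mem_ball_self hρ0) hg0 (mem_ball_zero_iff.mpr hwρ)
  · set D := ∑' j, g' j w with hDdef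
    have hD : HasSum (fun j => g' j w) D := hDsum.hasSum
    have h1 : HasSum (fun j => g' (j + 1) w) D := by
      have := (hasSum_nat_add_iff' 1).mpr hD
      simpa [hg'def] using this
    have hterm : (fun j : ℕ => g' (j + 1) w) =
        fun j : ℕ => ((bc α j : ℂ) * ((α : ℂ) + j)) * w ^ j := by
      funext j
      have hc : ((bc α (j+1) : ℝ) : ℂ) * (((j:ℝ) + 1 : ℝ) : ℂ)
          = ((bc α j : ℝ) : ℂ) * ((α + j : ℝ) : ℂ) := by
        rw [← Complex.ofReal_mul, ← Complex.ofReal_mul, bc_succ hα j]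
      push_cast at hc
      simp only [hg'def, Nat.add_sub_cancel]
      push_cast
      linear_combination w ^ j * hc
    have h1' : HasSum (fun j : ℕ => ((bc α j : ℂ) * ((α : ℂ) + j)) * w ^ j) D := hterm ▸ h1
    have h2 : HasSum (fun j : ℕ => g' j w * w) (D * w) := hD.mul_right w
    have hterm2 : (fun j : ℕ => g' j w * w) = fun j : ℕ => (bc α j : ℂ) * (j : ℂ) * w ^ j := by
      funext j
      cases j with
      | zero => simp [hg'def]
      | succ m =>
        simp only [hg'def, Nat.add_sub_cancel]
        push_cast
        rw [pow_succ]
        ring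
    have h2' : HasSum (fun j : ℕ => (bc α j : ℂ) * (j : ℂ) * w ^ j) (D * w) := hterm2 ▸ h2
    have h3 : D - D * w = (α : ℂ) * ∑' j : ℕ, (bc α j : ℂ) * w ^ j := by
      refine HasSum.unique ?_ (((summable_bc_cx hα hw).hasSum).mul_left _)
      have e : (fun j : ℕ => (α : ℂ) * ((bc α j : ℂ) * w ^ j))
          = fun j : ℕ => ((bc α j : ℂ) * ((α : ℂ) + j)) * w ^ j
              - (bc α j : ℂ) * (j : ℂ) * w ^ j := funext fun j => by ring
      rw [e]
      exact h1'.sub h2'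
    rw [mul_one_sub]
    exact h3

lemma hasSum_bc_cpow {α : ℝ} (hα : 0 < α) {z : ℂ} (hz : ‖z‖ < 1) :
    HasSum (fun j : ℕ => (bc α j : ℂ) * z ^ j) ((1 - z) ^ (-(α : ℂ))) := by
  set f : ℂ → ℂ := fun w => ∑' j : ℕ, (bc α j : ℂ) * w ^ j with hfdef
  have hslit : ∀ w : ℂ, ‖w‖ < 1 → (1 - w) ∈ Complex.slitPlane := by
    intro w hw
    apply Complex.mem_slitPlane_iff.mpr
    left
    have : |w.re| < 1 := lt_of_le_of_lt (Complex.abs_re_le_norm w) hw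
    simp only [Complex.sub_re, Complex.one_re]
    cases abs_lt.mp this with
    | intro h1 h2 => linarith
  have hne : ∀ w : ℂ, ‖w‖ < 1 → (1 - w) ≠ 0 := fun w hw =>
    Complex.slitPlane_ne_zero (hslit w hw)
  have hder : ∀ w ∈ ball (0:ℂ) 1, HasDerivAt (fun w => (1 - w) ^ (α:ℂ) * f w) 0 w := by
    intro w hw
    rw [mem_ball_zero_iff] at hw
    obtain ⟨D, hfD, hid⟩ := bderiv hα hw
    have hbase : HasDerivAt (fun w : ℂ => 1 - w) (-1) w := (hasDerivAt_id w).const_sub 1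
    have hcp : HasDerivAt (fun w : ℂ => (1 - w) ^ (α:ℂ))
        ((α:ℂ) * (1 - w) ^ ((α:ℂ) - 1) * (-1)) w := hbase.cpow_const (hslit w hw)
    have htot := hcp.mul hfD
    have hval : (α:ℂ) * (1 - w) ^ ((α:ℂ) - 1) * (-1) * f w + (1 - w) ^ (α:ℂ) * D = 0 := by
      have e : (1 - w) ^ (α:ℂ) = (1 - w) ^ ((α:ℂ) - 1) * (1 - w) := by
        nth_rewrite 1 [show (α:ℂ) = ((α:ℂ) - 1) + 1 by ring]
        rw [Complex.cpow_add _ _ (hne w hw), Complex.cpow_one]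
      rw [e]
      linear_combination (1 - w) ^ ((α:ℂ) - 1) * hid
    rw [hval] at htot
    exact htot
  have hconst : (1 - z) ^ (α:ℂ) * f z = (1 - (0:ℂ)) ^ (α:ℂ) * f 0 := by
    have hdiff : DifferentiableOn ℂ (fun w : ℂ => (1 - w) ^ (α:ℂ) * f w) (ball (0:ℂ) 1) :=
      fun w hw => (hder w hw).differentiableAt.differentiableWithinAt
    have hzero : ∀ w ∈ ball (0:ℂ) 1,
        fderivWithin ℂ (fun w : ℂ => (1 - w) ^ (α:ℂ) * f w) (ball (0:ℂ) 1) w = 0 := by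
      intro w hw
      rw [fderivWithin_of_isOpen isOpen_ball hw, (hder w hw).hasFDerivAt.fderiv]
      ext v
      simp
    exact (convex_ball (0:ℂ) 1).is_const_of_fderivWithin_eq_zero (𝕜 := ℂ) hdiff hzero
      (mem_ball_zero_iff.mpr hz) (mem_ball_self one_pos)
  have hf0 : f 0 = 1 := by
    have e : f 0 = ∑' j : ℕ, (bc α j : ℂ) * (0:ℂ) ^ j := rfl
    rw [e, tsum_eq_single 0 (fun j hj => by simp [zero_pow hj])]
    simp [bc_zero hα]
  rw [hf0, sub_zero, Complex.one_cpow, mul_one] at hconst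
  have hcne : (1 - z) ^ (α:ℂ) ≠ 0 := by
    rw [Ne, Complex.cpow_eq_zero_iff]
    rintro ⟨h, -⟩
    exact hne z hz h
  have hfz : f z = (1 - z) ^ (-(α:ℂ)) := by
    rw [Complex.cpow_neg]
    exact eq_inv_of_mul_eq_one_right hconst
  have hs2 := (summable_bc_cx hα hz).hasSum
  rw [show (∑' j : ℕ, (bc α j : ℂ) * z ^ j) = f z from rfl, hfz] at hs2
  exact hs2

/-- The `α`-th nabla fractional sum evaluated at `k`, with
`(−1)ʲ binom(−α,j) = Γ(α+j)/(Γ(j+1)Γ(α))`. -/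
noncomputable def nablaFracSum (a : ℤ) (α : ℝ) (x : ℤ → ℝ) (k : ℤ) : ℝ :=
  ∑ j ∈ Finset.range ((k - a - 1).toNat + 1),
    Real.Gamma (α + j) / (Real.Gamma ((j : ℝ) + 1) * Real.Gamma α) * x (k - (j : ℤ))

/-- N-transform of the nabla fractional sum: `𝒩_a{∇^{−α}x}(s) = X(s)/s^α`. -/
theorem nabla_transform_frac_sum
    (a : ℤ) (x : ℤ → ℝ) (X : ℂ → ℂ) (r : ℝ) (α : ℝ) (hα : 0 < α)
    (hX : ∀ s : ℂ, ‖s - 1‖ < r →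
      HasSum (fun k : ℕ => (1 - s) ^ k * (x ((k : ℤ) + 1 + a) : ℂ)) (X s)) :
    ∀ s : ℂ, ‖s - 1‖ < min 1 r →
      HasSum (fun k : ℕ => (1 - s) ^ k * (nablaFracSum a α x ((k : ℤ) + 1 + a) : ℂ))
        (X s / s ^ (α : ℂ)) := by
  intro s hs
  set z : ℂ := 1 - s with hzdef
  have hznorm : ‖z‖ = ‖s - 1‖ := by
    rw [hzdef]
    rw [show (1 : ℂ) - s = -(s - 1) by ring, norm_neg]
  have hz1 : ‖z‖ < 1 := by rw [hznorm]; exact lt_of_lt_of_le hs (min_le_left _ _)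
  have hzr : ‖z‖ < r := by rw [hznorm]; exact lt_of_lt_of_le hs (min_le_right _ _)
  have hr0 : 0 < min 1 r := lt_of_le_of_lt (norm_nonneg _) hs
  -- Summability of the coefficient series (A) in norm
  have hA : Summable (fun j : ℕ => ‖(bc α j : ℂ) * z ^ j‖) := by
    apply (summable_bc hα (norm_nonneg z) hz1).congr
    intro j
    rw [norm_mul, norm_pow, Complex.norm_real, Real.norm_eq_abs, abs_of_pos (bc_pos hα j)]
  -- Summability of B in norm
  set ρ : ℝ := (‖z‖ + min 1 r) / 2 with hρdef
  have hρ0 : 0 < ρ := by positivity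
  have hzρ : ‖z‖ < ρ := by rw [hρdef]; linarith [hznorm ▸ hs]
  have hρm : ρ < min 1 r := by
    rw [hρdef]
    have := hznorm ▸ hs
    linarith
  have hρr : ρ < r := lt_of_lt_of_le hρm (min_le_right _ _)
  have hXρ := hX (1 - (ρ : ℂ)) (by
    rw [show (1 : ℂ) - (ρ : ℂ) - 1 = -(ρ : ℂ) by ring, norm_neg,
      Complex.norm_real, Real.norm_eq_abs, abs_of_pos hρ0]
    exact hρr)
  have hXρ' : Summable (fun k : ℕ => (ρ : ℂ) ^ k * (x ((k : ℤ) + 1 + a) : ℂ)) := by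
    apply hXρ.summable.congr
    intro k
    congr 2
    ring
  have htend : Tendsto (fun k : ℕ => ρ ^ k * |x ((k : ℤ) + 1 + a)|) atTop (𝓝 0) := by
    have h1 := (hXρ'.tendsto_atTop_zero).norm
    rw [norm_zero] at h1
    apply h1.congr
    intro k
    rw [norm_mul, norm_pow, Complex.norm_real, Real.norm_eq_abs, abs_of_pos hρ0,
      Complex.norm_real, Real.norm_eq_abs]
  obtain ⟨M, hM⟩ := htend.bddAbove_range
  have hMb : ∀ k : ℕ, ρ ^ k * |x ((k : ℤ) + 1 + a)| ≤ M := fun k =>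
    hM (Set.mem_range_self k)
  have hgeo : Summable (fun k : ℕ => M * (‖z‖ / ρ) ^ k) := by
    apply Summable.mul_left
    apply summable_geometric_of_lt_one (by positivity)
    rw [div_lt_one hρ0]
    exact hzρ
  have hB : Summable (fun k : ℕ => ‖z ^ k * (x ((k : ℤ) + 1 + a) : ℂ)‖) := by
    refine Summable.of_nonneg_of_le (fun k => norm_nonneg _) (fun k => ?_) hgeo
    rw [norm_mul, norm_pow, Complex.norm_real, Real.norm_eq_abs]
    have e : ‖z‖ ^ k = (‖z‖ / ρ) ^ k * ρ ^ k := by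
      rw [div_pow, div_mul_cancel₀]
      exact (pow_pos hρ0 k).ne'
    rw [e, mul_assoc]
    calc (‖z‖ / ρ) ^ k * (ρ ^ k * |x ((k : ℤ) + 1 + a)|)
        ≤ (‖z‖ / ρ) ^ k * M :=
          mul_le_mul_of_nonneg_left (hMb k) (by positivity)
      _ = M * (‖z‖ / ρ) ^ k := by ring
  -- Cauchy product
  have key := hasSum_sum_range_mul_of_summable_norm hA hB
  have hAsum : HasSum (fun j : ℕ => (bc α j : ℂ) * z ^ j) (s ^ (-(α : ℂ))) := by
    have := hasSum_bc_cpow hα hz1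
    rwa [show (1 : ℂ) - z = s by rw [hzdef]; ring] at this
  have hBsum : HasSum (fun k : ℕ => z ^ k * (x ((k : ℤ) + 1 + a) : ℂ)) (X s) := by
    have := hX s (by rw [← hznorm]; exact hzr)
    rwa [hzdef]
  rw [hAsum.tsum_eq, hBsum.tsum_eq] at key
  have hval : s ^ (-(α:ℂ)) * X s = X s / s ^ (α:ℂ) := by
    rw [Complex.cpow_neg, div_eq_mul_inv, mul_comm]
  rw [hval] at key
  have efun : (fun k : ℕ => (1 - s) ^ k * (nablaFracSum a α x ((k : ℤ) + 1 + a) : ℂ))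
      = fun n : ℕ => ∑ j ∈ Finset.range (n + 1),
          ((bc α j : ℂ) * z ^ j) * (z ^ (n - j) * (x (((n - j : ℕ) : ℤ) + 1 + a) : ℂ)) := by
    funext n
    have e1 : (((n : ℤ) + 1 + a) - a - 1).toNat + 1 = n + 1 := by
      rw [show ((n : ℤ) + 1 + a) - a - 1 = (n : ℤ) by ring, Int.toNat_natCast]
    have e2 : (nablaFracSum a α x ((n : ℤ) + 1 + a) : ℂ)
        = ∑ j ∈ Finset.range (n + 1), (bc α j : ℂ) * (x ((n : ℤ) + 1 + a - j) : ℂ) := by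
      unfold nablaFracSum
      rw [e1]
      push_cast
      apply Finset.sum_congr rfl
      intro j _
      rw [bc_def]
      push_cast
      ring
    rw [e2, show (1 : ℂ) - s = z from rfl, Finset.mul_sum]
    apply Finset.sum_congr rfl
    intro j hj
    have hjn : j ≤ n := Nat.lt_succ_iff.mp (Finset.mem_range.mp hj)
    have e3 : (((n - j : ℕ) : ℤ)) + 1 + a = (n : ℤ) + 1 + a - j := by
      rw [Nat.cast_sub hjn]; ring
    have e4 : z ^ j * z ^ (n - j) = z ^ n := by
      rw [← pow_add, Nat.add_sub_cancel' hjn]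
    rw [e3, ← e4]
    ring
  rw [efun]
  exact key
end

section
/- N-transform of the nabla Grünwald–Letnikov fractional difference: for x : ℕ_{a+1} → ℝ with X(s) = 𝒩_a{x}(s) converging for |s−1| < r ≤ 1, and for any α > 0 with α ∉ ℤ₊, the N-transform of (ᴳ∇^α x)(k) = Σ_{j=0}^{k−a−1} (−1)ʲ binom(α, j) x(k−j) equals s^α X(s) for |s−1| < r. -/
open Filter Finset Topology

noncomputable def binCoef (α : ℝ) (j : ℕ) : ℝ :=
  (∏ i ∈ Finset.range j, (α - i)) / j.factorial

lemma binCoef_zero (α : ℝ) : binCoef α 0 = 1 := by simp [binCoef]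

lemma binCoef_succ (α : ℝ) (j : ℕ) :
    binCoef α (j + 1) = (α - j) / (j + 1) * binCoef α j := by
  have h1 : ((j : ℝ) + 1) ≠ 0 := by positivity
  have h2 : (j.factorial : ℝ) ≠ 0 := Nat.cast_ne_zero.2 j.factorial_ne_zero
  simp only [binCoef, Finset.prod_range_succ, Nat.factorial_succ]
  push_cast
  field_simp

lemma binCoef_ne_zero {α : ℝ} (hαZ : ∀ n : ℕ, α ≠ (n : ℝ)) (j : ℕ) : binCoef α j ≠ 0 :=
  div_ne_zero (Finset.prod_ne_zero_iff.2 fun i _ => sub_ne_zero.2 (hαZ i))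
    (Nat.cast_ne_zero.2 j.factorial_ne_zero)

lemma tendsto_aux (β γ : ℝ) :
    Tendsto (fun j : ℕ => |β - j| / ((j : ℝ) + γ)) atTop (𝓝 1) := by
  have h1 : Tendsto (fun j : ℕ => ((j : ℝ) + γ)) atTop atTop :=
    tendsto_atTop_add_const_right _ γ tendsto_natCast_atTop_atTop
  have h0 : Tendsto (fun j : ℕ => (β + γ) / ((j : ℝ) + γ)) atTop (𝓝 0) :=
    h1.const_div_atTop _
  have h2 : Tendsto (fun j : ℕ => 1 - (β + γ) / ((j : ℝ) + γ)) atTop (𝓝 1) := by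
    simpa using tendsto_const_nhds.sub h0
  refine h2.congr' ?_
  have hβ : ∀ᶠ j : ℕ in atTop, β ≤ (j : ℝ) :=
    tendsto_natCast_atTop_atTop.eventually_ge_atTop β
  have hγ : ∀ᶠ j : ℕ in atTop, 0 < (j : ℝ) + γ := h1.eventually_gt_atTop 0
  filter_upwards [hβ, hγ] with j hj hj'
  rw [abs_of_nonpos (by linarith), neg_sub]
  field_simp
  ring

lemma abs_binCoef_succ (α : ℝ) (j : ℕ) :
    |binCoef α (j + 1)| = |α - j| / ((j : ℝ) + 1) * |binCoef α j| := by
  rw [binCoef_succ, abs_mul, abs_div, abs_of_pos (by positivity : (0:ℝ) < (j:ℝ) + 1)]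

lemma summable_A {α : ℝ} (hαZ : ∀ n : ℕ, α ≠ (n : ℝ)) {ρ : ℝ} (hρ0 : 0 < ρ) (hρ1 : ρ < 1) :
    Summable (fun j : ℕ => |binCoef α j| * ρ ^ j) := by
  refine summable_of_ratio_test_tendsto_lt_one hρ1
    (Eventually.of_forall fun j => ?_) ?_
  · exact mul_ne_zero (abs_ne_zero.2 (binCoef_ne_zero hαZ j)) (pow_ne_zero _ hρ0.ne')
  · have key : ∀ j : ℕ, ‖|binCoef α (j+1)| * ρ ^ (j+1)‖ / ‖|binCoef α j| * ρ ^ j‖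
        = |α - j| / ((j : ℝ) + 1) * ρ := by
      intro j
      have hb : |binCoef α j| ≠ 0 := abs_ne_zero.2 (binCoef_ne_zero hαZ j)
      have hρj : ρ ^ j ≠ 0 := pow_ne_zero _ hρ0.ne'
      simp only [Real.norm_eq_abs, abs_mul, abs_abs, abs_pow, abs_of_pos hρ0]
      rw [abs_binCoef_succ, pow_succ]
      field_simp
    simp only [key]
    have := (tendsto_aux α 1).mul_const ρ
    simpa using this

lemma summable_B {α : ℝ} (hαZ : ∀ n : ℕ, α ≠ (n : ℝ)) {ρ : ℝ} (hρ0 : 0 < ρ) (hρ1 : ρ < 1) :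
    Summable (fun j : ℕ => ((j : ℝ) + 1) * |binCoef α (j + 1)| * ρ ^ j) := by
  refine summable_of_ratio_test_tendsto_lt_one hρ1
    (Eventually.of_forall fun j => ?_) ?_
  · exact mul_ne_zero (mul_ne_zero (by positivity)
      (abs_ne_zero.2 (binCoef_ne_zero hαZ _))) (pow_ne_zero _ hρ0.ne')
  · have key : ∀ j : ℕ, ‖((j : ℝ) + 1 + 1) * |binCoef α (j+2)| * ρ ^ (j+1)‖ /
        ‖((j : ℝ) + 1) * |binCoef α (j+1)| * ρ ^ j‖
        = |α - ((j : ℝ) + 1)| / ((j : ℝ) + 1) * ρ := by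
      intro j
      have hb : |binCoef α (j+1)| ≠ 0 := abs_ne_zero.2 (binCoef_ne_zero hαZ _)
      have hρj : ρ ^ j ≠ 0 := pow_ne_zero _ hρ0.ne'
      have h2 : |binCoef α (j+2)| = |α - ((j:ℝ)+1)| / ((j : ℝ) + 1 + 1) * |binCoef α (j+1)| := by
        have := abs_binCoef_succ α (j+1)
        push_cast at this ⊢
        convert this using 4 <;> push_cast <;> ring
      have ha1 : |(j : ℝ) + 1 + 1| = (j : ℝ) + 1 + 1 := abs_of_pos (by positivity)
      have ha2 : |(j : ℝ) + 1| = (j : ℝ) + 1 := abs_of_pos (by positivity)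
      simp only [Real.norm_eq_abs, abs_mul, abs_abs, abs_pow, abs_of_pos hρ0, ha1, ha2]
      rw [h2, pow_succ]
      have hj1 : ((j:ℝ) + 1) ≠ 0 := by positivity
      have hj2 : ((j:ℝ) + 1 + 1) ≠ 0 := by positivity
      field_simp
    have h' : Tendsto (fun j : ℕ => |α - ((j : ℝ) + 1)| / ((j : ℝ) + 1) * ρ) atTop (𝓝 ρ) := by
      have h0 : Tendsto (fun j : ℕ => |α - (j : ℝ)| / (j : ℝ)) atTop (𝓝 1) := by
        simpa using tendsto_aux α 0
      have := (h0.comp (tendsto_add_atTop_nat 1)).mul_const ρ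
      simpa [Function.comp] using this
    refine h'.congr fun j => ?_
    · push_cast
      exact (key j).symm

noncomputable def binF (α : ℝ) (z : ℂ) : ℂ := ∑' j : ℕ, (binCoef α j : ℂ) * z ^ j

noncomputable def binD (α : ℝ) (z : ℂ) : ℂ :=
  ∑' j : ℕ, (binCoef α j : ℂ) * ((j : ℂ) * z ^ (j - 1))

variable {α : ℝ} {z : ℂ}

lemma rho_pos (hz : ‖z‖ < 1) : 0 < (‖z‖ + 1) / 2 := by positivity
lemma rho_lt_one (hz : ‖z‖ < 1) : (‖z‖ + 1) / 2 < 1 := by linarith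
lemma norm_lt_rho (hz : ‖z‖ < 1) : ‖z‖ < (‖z‖ + 1) / 2 := by linarith

lemma summable_binF_norm (hαZ : ∀ n : ℕ, α ≠ (n : ℝ)) (hz : ‖z‖ < 1) :
    Summable (fun j : ℕ => ‖(binCoef α j : ℂ) * z ^ j‖) := by
  refine ((summable_A hαZ (rho_pos hz) (rho_lt_one hz)).of_nonneg_of_le
    (fun j => norm_nonneg _) fun j => ?_)
  rw [norm_mul, Complex.norm_real, norm_pow, Real.norm_eq_abs]
  exact mul_le_mul_of_nonneg_left
    (pow_le_pow_left₀ (norm_nonneg _) (norm_lt_rho hz).le _) (abs_nonneg _)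

lemma hasSum_binF (hαZ : ∀ n : ℕ, α ≠ (n : ℝ)) (hz : ‖z‖ < 1) :
    HasSum (fun j : ℕ => (binCoef α j : ℂ) * z ^ j) (binF α z) :=
  (summable_binF_norm hαZ hz).of_norm.hasSum

lemma summable_binD_u (hαZ : ∀ n : ℕ, α ≠ (n : ℝ)) {ρ : ℝ} (hρ0 : 0 < ρ) (hρ1 : ρ < 1) :
    Summable (fun j : ℕ => (j : ℝ) * |binCoef α j| * ρ ^ (j - 1)) := by
  rw [← summable_nat_add_iff 1]
  refine (summable_B hαZ hρ0 hρ1).congr fun j => ?_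
  push_cast
  simp [Nat.add_sub_cancel]

lemma summable_binD_norm (hαZ : ∀ n : ℕ, α ≠ (n : ℝ)) (hz : ‖z‖ < 1) :
    Summable (fun j : ℕ => ‖(binCoef α j : ℂ) * ((j : ℂ) * z ^ (j - 1))‖) := by
  refine ((summable_binD_u hαZ (rho_pos hz) (rho_lt_one hz)).of_nonneg_of_le
    (fun j => norm_nonneg _) fun j => ?_)
  rw [norm_mul, norm_mul, Complex.norm_real, Complex.norm_natCast, norm_pow,
    Real.norm_eq_abs]
  calc |binCoef α j| * ((j:ℝ) * ‖z‖ ^ (j-1)) ≤ |binCoef α j| * ((j:ℝ) * ((‖z‖+1)/2) ^ (j-1)) := by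
        apply mul_le_mul_of_nonneg_left _ (abs_nonneg _)
        exact mul_le_mul_of_nonneg_left
          (pow_le_pow_left₀ (norm_nonneg _) (norm_lt_rho hz).le _) (Nat.cast_nonneg _)
    _ = (j : ℝ) * |binCoef α j| * ((‖z‖+1)/2) ^ (j-1) := by ring

lemma hasDerivAt_binF (hαZ : ∀ n : ℕ, α ≠ (n : ℝ)) (hz : ‖z‖ < 1) :
    HasDerivAt (binF α) (binD α z) z := by
  set ρ : ℝ := (‖z‖ + 1) / 2 with hρ
  have hρ0 : 0 < ρ := rho_pos hz
  have hρ1 : ρ < 1 := rho_lt_one hz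
  have hu : Summable (fun j : ℕ => (j : ℝ) * |binCoef α j| * ρ ^ (j - 1)) :=
    summable_binD_u hαZ hρ0 hρ1
  refine hasDerivAt_tsum_of_isPreconnected hu (Metric.isOpen_ball)
    ((convex_ball (0:ℂ) ρ).isPreconnected)
    (fun n y _ => (hasDerivAt_pow n y).const_mul ((binCoef α n : ℝ) : ℂ))
    (fun n y hy => ?_) (Metric.mem_ball_self hρ0) ?_ ?_
  · rw [norm_mul, norm_mul, Complex.norm_real, Complex.norm_natCast, norm_pow,
      Real.norm_eq_abs]
    have hyρ : ‖y‖ ≤ ρ := by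
      simpa using (mem_ball_zero_iff.1 hy).le
    calc |binCoef α n| * ((n:ℝ) * ‖y‖ ^ (n-1)) ≤ |binCoef α n| * ((n:ℝ) * ρ ^ (n-1)) := by
          apply mul_le_mul_of_nonneg_left _ (abs_nonneg _)
          exact mul_le_mul_of_nonneg_left
            (pow_le_pow_left₀ (norm_nonneg _) hyρ _) (Nat.cast_nonneg _)
      _ = (n:ℝ) * |binCoef α n| * ρ ^ (n-1) := by ring
  · refine summable_of_ne_finset_zero (s := {0}) fun n hn => ?_
    have : n ≠ 0 := by simpa using hn
    simp [zero_pow this]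
  · simpa using mem_ball_zero_iff.2 (norm_lt_rho hz)

variable {α : ℝ} {z : ℂ}

lemma binF_ode (hαZ : ∀ n : ℕ, α ≠ (n : ℝ)) (hz : ‖z‖ < 1) :
    (1 + z) * binD α z = (α : ℂ) * binF α z := by
  have hD : HasSum (fun j : ℕ => (binCoef α j : ℂ) * ((j : ℂ) * z ^ (j - 1))) (binD α z) :=
    (summable_binD_norm hαZ hz).of_norm.hasSum
  -- z * D
  have h1 : HasSum (fun n : ℕ => (n : ℂ) * (binCoef α n : ℂ) * z ^ n) (binD α z * z) := by
    have key : (fun n : ℕ => (n : ℂ) * (binCoef α n : ℂ) * z ^ n)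
        = fun n => (binCoef α n : ℂ) * ((n : ℂ) * z ^ (n - 1)) * z := by
      funext n
      cases n with
      | zero => simp
      | succ m => rw [Nat.add_sub_cancel]; push_cast; ring
    rw [key]
    exact hD.mul_right z
  -- shifted sum
  have h2a : HasSum (fun n : ℕ => (binCoef α (n+1) : ℂ) *
      (((n+1 : ℕ) : ℂ) * z ^ ((n+1) - 1))) (binD α z) := by
    rw [hasSum_nat_add_iff
      (f := fun j : ℕ => (binCoef α j : ℂ) * ((j : ℂ) * z ^ (j - 1))) 1]
    simpa using hD
  have h2 : HasSum (fun n : ℕ =>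
      ((α : ℂ) - n) * (binCoef α n : ℂ) * z ^ n) (binD α z) := by
    have key : (fun n : ℕ => ((α : ℂ) - n) * (binCoef α n : ℂ) * z ^ n)
        = fun n : ℕ => (binCoef α (n+1) : ℂ) * (((n+1 : ℕ) : ℂ) * z ^ ((n+1) - 1)) := by
      funext n
      have hcast : ((binCoef α (n+1) : ℝ) : ℂ)
          = ((α : ℂ) - n) / ((n : ℂ) + 1) * (binCoef α n : ℝ) := by
        rw [binCoef_succ]
        push_cast
        ring
      rw [Nat.add_sub_cancel, hcast]
      have hne : ((n : ℂ) + 1) ≠ 0 := Nat.cast_add_one_ne_zero n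
      push_cast
      field_simp
    rw [key]
    exact h2a
  have h3 : HasSum (fun n : ℕ => (α : ℂ) * ((binCoef α n : ℂ) * z ^ n))
      (binD α z + binD α z * z) := by
    have key : (fun n : ℕ => (α : ℂ) * ((binCoef α n : ℂ) * z ^ n))
        = fun n : ℕ => ((α : ℂ) - n) * (binCoef α n : ℂ) * z ^ n
            + (n : ℂ) * (binCoef α n : ℂ) * z ^ n := by
      funext n; ring
    rw [key]
    exact h2.add h1
  have h4 : HasSum (fun n : ℕ => (α : ℂ) * ((binCoef α n : ℂ) * z ^ n))
      ((α : ℂ) * binF α z) := (hasSum_binF hαZ hz).mul_left _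
  have := h3.unique h4
  linear_combination this

variable {α : ℝ} {z : ℂ}

lemma one_add_mem_slitPlane {w : ℂ} (hw : ‖w‖ < 1) : (1 + w) ∈ Complex.slitPlane := by
  rw [Complex.mem_slitPlane_iff]
  left
  have h := Complex.abs_re_le_norm w
  simp only [Complex.add_re, Complex.one_re]
  have := abs_le.1 h
  linarith [this.1]

lemma one_add_ne_zero {w : ℂ} (hw : ‖w‖ < 1) : (1 + w) ≠ 0 :=
  Complex.slitPlane_ne_zero (one_add_mem_slitPlane hw)

lemma hasDerivAt_H (hαZ : ∀ n : ℕ, α ≠ (n : ℝ)) {w : ℂ} (hw : ‖w‖ < 1) :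
    HasDerivAt (fun w => binF α w * (1 + w) ^ (-(α:ℂ))) 0 w := by
  have hne := one_add_ne_zero hw
  have hf := hasDerivAt_binF hαZ hw
  have hg : HasDerivAt (fun w : ℂ => (1 + w) ^ (-(α:ℂ)))
      (-(α:ℂ) * (1 + w) ^ (-(α:ℂ) - 1) * 1) w :=
    HasDerivAt.cpow_const ((hasDerivAt_id w).const_add 1) (one_add_mem_slitPlane hw)
  have h := hf.mul hg
  refine h.congr_deriv (Eq.symm ?_)
  have hkey : (1 + w) ^ (-(α:ℂ)) = (1 + w) ^ (-(α:ℂ) - 1) * (1 + w) := by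
    conv_lhs => rw [show (-(α:ℂ)) = (-(α:ℂ) - 1) + 1 by ring]
    rw [Complex.cpow_add _ _ hne, Complex.cpow_one]
  rw [hkey]
  linear_combination (-(1 + w) ^ (-(α:ℂ) - 1)) * (binF_ode hαZ hw)

lemma binF_eq (hαZ : ∀ n : ℕ, α ≠ (n : ℝ)) (hz : ‖z‖ < 1) :
    binF α z = (1 + z) ^ (α : ℂ) := by
  have hφd : ∀ t ∈ Set.Icc (0:ℝ) 1,
      HasDerivAt (fun t : ℝ => binF α ((t:ℂ) * z) * (1 + (t:ℂ) * z) ^ (-(α:ℂ))) 0 t := by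
    intro t ht
    have htz : ‖(t:ℂ) * z‖ < 1 := by
      rw [norm_mul, Complex.norm_real, Real.norm_eq_abs, abs_of_nonneg ht.1]
      calc t * ‖z‖ ≤ 1 * ‖z‖ := mul_le_mul_of_nonneg_right ht.2 (norm_nonneg z)
        _ < 1 := by simpa using hz
    have hmul : HasDerivAt (fun w : ℂ => w * z) z (t:ℂ) := by
      simpa using (hasDerivAt_id ((t:ℂ))).mul_const z
    have h1 := (hasDerivAt_H hαZ htz).comp (t:ℂ) hmul
    have h2 := h1.comp_ofReal
    simpa [Function.comp] using h2
  have hcont : ContinuousOn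
      (fun t : ℝ => binF α ((t:ℂ) * z) * (1 + (t:ℂ) * z) ^ (-(α:ℂ))) (Set.Icc 0 1) :=
    fun t ht => (hφd t ht).continuousAt.continuousWithinAt
  have hconst := constant_of_has_deriv_right_zero hcont
    (fun t ht => (hφd t (Set.Ico_subset_Icc_self ht)).hasDerivWithinAt) 1
    (Set.right_mem_Icc.2 zero_le_one)
  have hbF0 : binF α 0 = 1 := by
    rw [binF, tsum_eq_single 0 (fun j hj => by simp [zero_pow hj])]
    simp [binCoef_zero]
  norm_num [Complex.one_cpow] at hconst
  rw [hbF0] at hconst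
  have hne := one_add_ne_zero hz
  have hinv : (1 + z) ^ (-(α:ℂ)) * (1 + z) ^ (α:ℂ) = 1 := by
    rw [← Complex.cpow_add _ _ hne]
    simp
  calc binF α z = binF α z * ((1 + z) ^ (-(α:ℂ)) * (1 + z) ^ (α:ℂ)) := by
        rw [hinv, mul_one]
    _ = (binF α z * (1 + z) ^ (-(α:ℂ))) * (1 + z) ^ (α:ℂ) := by ring
    _ = (1 + z) ^ (α:ℂ) := by rw [hconst, one_mul]

theorem hasSum_binomial (hαZ : ∀ n : ℕ, α ≠ (n : ℝ)) (hz : ‖z‖ < 1) :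
    HasSum (fun j : ℕ => (binCoef α j : ℂ) * z ^ j) ((1 + z) ^ (α : ℂ)) := by
  rw [← binF_eq hαZ hz]
  exact hasSum_binF hαZ hz

variable {α : ℝ}

lemma Gamma_sub_prod (hαZ : ∀ n : ℕ, α ≠ (n : ℝ)) (j : ℕ) :
    Real.Gamma ((j : ℝ) - α) = (∏ i ∈ Finset.range j, ((i : ℝ) - α)) * Real.Gamma (-α) := by
  induction j with
  | zero => simp [zero_sub]
  | succ m ih =>
    have hx : (m : ℝ) - α ≠ 0 := sub_ne_zero.2 fun h => hαZ m h.symm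
    have harg : ((m + 1 : ℕ) : ℝ) - α = ((m : ℝ) - α) + 1 := by push_cast; ring
    rw [harg, Real.Gamma_add_one hx, ih, Finset.prod_range_succ]
    ring

lemma gamma_coef (hαZ : ∀ n : ℕ, α ≠ (n : ℝ)) (j : ℕ) :
    Real.Gamma ((j : ℝ) - α) / (Real.Gamma (-α) * Real.Gamma ((j : ℝ) + 1))
      = (-1 : ℝ) ^ j * binCoef α j := by
  have hΓ : Real.Gamma (-α) ≠ 0 := by
    refine Real.Gamma_ne_zero fun m h => ?_
    exact hαZ m (by linarith [h])
  have hfac : Real.Gamma ((j : ℝ) + 1) = j.factorial := Real.Gamma_nat_eq_factorial j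
  have hprod : (∏ i ∈ Finset.range j, ((i : ℝ) - α))
      = (-1 : ℝ) ^ j * ∏ i ∈ Finset.range j, (α - i) := by
    calc (∏ i ∈ Finset.range j, ((i : ℝ) - α))
        = ∏ i ∈ Finset.range j, (-1 : ℝ) * (α - i) :=
          Finset.prod_congr rfl fun i _ => by ring
      _ = (-1 : ℝ) ^ j * ∏ i ∈ Finset.range j, (α - i) := by
          rw [Finset.prod_mul_distrib, Finset.prod_const, Finset.card_range]
  rw [Gamma_sub_prod hαZ, hfac, hprod, binCoef]
  have hf : (j.factorial : ℝ) ≠ 0 := Nat.cast_ne_zero.2 j.factorial_ne_zero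
  field_simp

/-- The `α`-th nabla Grünwald–Letnikov fractional difference evaluated at `k`, with
`(−1)ʲ binom(α,j) = Γ(j−α)/(Γ(−α)Γ(j+1))`. -/
noncomputable def nablaGLDiff (a : ℤ) (α : ℝ) (x : ℤ → ℝ) (k : ℤ) : ℝ :=
  ∑ j ∈ Finset.range ((k - a - 1).toNat + 1),
    Real.Gamma ((j : ℝ) - α) / (Real.Gamma (-α) * Real.Gamma ((j : ℝ) + 1)) *
      x (k - (j : ℤ))

/-- N-transform of the nabla Grünwald–Letnikov fractional difference:
`𝒩_a{ᴳ∇^α x}(s) = s^α X(s)`. -/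
theorem nabla_transform_GL_diff
    (a : ℤ) (x : ℤ → ℝ) (X : ℂ → ℂ) (r : ℝ) (hr : r ≤ 1)
    (α : ℝ) (hα : 0 < α) (hαZ : ∀ n : ℕ, α ≠ (n : ℝ))
    (hX : ∀ s : ℂ, ‖s - 1‖ < r →
      HasSum (fun k : ℕ => (1 - s) ^ k * (x ((k : ℤ) + 1 + a) : ℂ)) (X s)) :
    ∀ s : ℂ, ‖s - 1‖ < r →
      HasSum (fun k : ℕ => (1 - s) ^ k * (nablaGLDiff a α x ((k : ℤ) + 1 + a) : ℂ))
        (s ^ (α : ℂ) * X s) := by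
  intro s hs
  have hr0 : 0 < r := lt_of_le_of_lt (norm_nonneg _) hs
  have hzn : ‖(1 : ℂ) - s‖ < r := by
    rw [show (1 : ℂ) - s = -(s - 1) by ring, norm_neg]
    exact hs
  have hz1 : ‖(1 : ℂ) - s‖ < 1 := lt_of_lt_of_le hzn hr
  have hnegz : ‖-((1 : ℂ) - s)‖ < 1 := by rwa [norm_neg]
  -- binomial part
  have hFsum : HasSum (fun j : ℕ =>
      ((binCoef α j : ℝ) : ℂ) * ((-1 : ℂ) ^ j * ((1 : ℂ) - s) ^ j)) (s ^ (α : ℂ)) := by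
    have h := hasSum_binomial hαZ hnegz
    rw [show (1 : ℂ) + -((1 : ℂ) - s) = s by ring] at h
    exact h.congr_fun fun j => by rw [← neg_pow]
  have hFnorm : Summable (fun j : ℕ =>
      ‖((binCoef α j : ℝ) : ℂ) * ((-1 : ℂ) ^ j * ((1 : ℂ) - s) ^ j)‖) := by
    refine (summable_binF_norm hαZ hnegz).congr fun j => ?_
    rw [← neg_pow]
  -- x part
  have hgsum : HasSum (fun k : ℕ =>
      ((1 : ℂ) - s) ^ k * ((x ((k : ℤ) + 1 + a) : ℝ) : ℂ)) (X s) := hX s hs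
  have hgnorm : Summable (fun k : ℕ =>
      ‖((1 : ℂ) - s) ^ k * ((x ((k : ℤ) + 1 + a) : ℝ) : ℂ)‖) := by
    set ρ : ℝ := (‖(1 : ℂ) - s‖ + r) / 2 with hρ
    have hρ0 : 0 < ρ := by rw [hρ]; have := norm_nonneg ((1 : ℂ) - s); linarith
    have hzρ : ‖(1 : ℂ) - s‖ < ρ := by rw [hρ]; linarith
    have hρr : ρ < r := by rw [hρ]; linarith
    have hs' : ‖(((1 - ρ : ℝ)) : ℂ) - 1‖ < r := by
      rw [show (((1 - ρ : ℝ)) : ℂ) - 1 = ((-ρ : ℝ) : ℂ) by push_cast; ring,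
        Complex.norm_real, Real.norm_eq_abs, abs_of_nonpos (by linarith)]
      simpa using hρr
    have hXs' := hX ((1 - ρ : ℝ) : ℂ) hs'
    rw [show (1 : ℂ) - ((1 - ρ : ℝ) : ℂ) = ((ρ : ℝ) : ℂ) by push_cast; ring] at hXs'
    obtain ⟨C, hC⟩ := hXs'.summable.tendsto_atTop_zero.norm.bddAbove_range
    rw [mem_upperBounds] at hC
    have hCb : ∀ k : ℕ, ρ ^ k * ‖((x ((k : ℤ) + 1 + a) : ℝ) : ℂ)‖ ≤ C := by
      intro k
      have := hC _ (Set.mem_range_self k)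
      rwa [norm_mul, norm_pow, Complex.norm_real, Real.norm_eq_abs,
        abs_of_pos hρ0] at this
    have hgeo : Summable (fun k : ℕ => C * (‖(1 : ℂ) - s‖ / ρ) ^ k) :=
      (summable_geometric_of_lt_one (by positivity)
        ((div_lt_one hρ0).2 hzρ)).mul_left C
    refine Summable.of_nonneg_of_le (fun k => norm_nonneg _) (fun k => ?_) hgeo
    have hρk : (ρ : ℝ) ^ k ≠ 0 := pow_ne_zero _ hρ0.ne'
    calc ‖((1 : ℂ) - s) ^ k * ((x ((k : ℤ) + 1 + a) : ℝ) : ℂ)‖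
        = ‖(1 : ℂ) - s‖ ^ k * ‖((x ((k : ℤ) + 1 + a) : ℝ) : ℂ)‖ := by
          rw [norm_mul, norm_pow]
      _ = (‖(1 : ℂ) - s‖ / ρ) ^ k * (ρ ^ k * ‖((x ((k : ℤ) + 1 + a) : ℝ) : ℂ)‖) := by
          rw [div_pow]; field_simp
      _ ≤ (‖(1 : ℂ) - s‖ / ρ) ^ k * C :=
          mul_le_mul_of_nonneg_left (hCb k) (by positivity)
      _ = C * (‖(1 : ℂ) - s‖ / ρ) ^ k := by ring
  -- Cauchy product
  have hconv := hasSum_sum_range_mul_of_summable_norm hFnorm hgnorm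
  rw [hFsum.tsum_eq, hgsum.tsum_eq] at hconv
  refine hconv.congr_fun fun n => ?_
  rw [nablaGLDiff, show ((((n : ℤ) + 1 + a) - a - 1).toNat + 1) = n + 1 by omega]
  simp only [gamma_coef hαZ]
  push_cast
  rw [Finset.mul_sum]
  refine Finset.sum_congr rfl fun j hj => ?_
  have hjn : j ≤ n := Nat.lt_succ_iff.1 (Finset.mem_range.1 hj)
  rw [show (n : ℤ) + 1 + a - (j : ℤ) = ((n - j : ℕ) : ℤ) + 1 + a by omega]
  have hpow : ((1 : ℂ) - s) ^ j * ((1 : ℂ) - s) ^ (n - j) = ((1 : ℂ) - s) ^ n := by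
    rw [← pow_add, Nat.add_sub_cancel' hjn]
  rw [← hpow]
  ring
end
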